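/- Let p be an odd prime, f₁, f₂ odd positive integers, and ℓ an odd prime with ℓ ∤ p·f₁·f₂. Let α₁, α₂ be non-negative integers with max(α₁,α₂) ≥ 1. Then C_{p,f}(ℓ^{α₁}, ℓ^{α₂}) = ℓ^{max(α₁,α₂)−1}·(ℓ − 1 − (p/ℓ) − ((p−1)/ℓ)²) if α₁+α₂ is even, and C_{p,f}(ℓ^{α₁}, ℓ^{α₂}) = ℓ^{max(α₁,α₂)−1}·(−1 − ((p−1)/ℓ)²) if α₁+α₂ is odd, where (·/ℓ) denotes the Legendre symbol. -/

import Mathlib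

open scoped Classical

noncomputable section

/-- `D(m,n) := (m+1-n)^2 - 4m`. -/
def Dfun (m n : ℤ) : ℤ := (m + 1 - n) ^ 2 - 4 * m

/-- `C_p^{(ℓ)}(a,f,n)`: the number of units `m` modulo `ℓ^e`, where `e = ν_ℓ(4nf²)`,
satisfying `D(p,m) ≡ a f² (mod ℓ^e)`. -/
def Cpl (p : ℕ) (a : ℤ) (f n ℓ : ℕ) : ℕ :=
  ((Finset.range (ℓ ^ ((4 * n * f ^ 2).factorization ℓ))).filter
    (fun m => Nat.Coprime m (ℓ ^ ((4 * n * f ^ 2).factorization ℓ)) ∧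
      ((ℓ : ℤ) ^ ((4 * n * f ^ 2).factorization ℓ)) ∣
        (Dfun (p : ℤ) (m : ℤ) - a * (f : ℤ) ^ 2))).card

/-- The Kronecker symbol at the prime `2`: `0` for even `a`, `1` for `a ≡ ±1 (mod 8)`,
`-1` for `a ≡ ±3 (mod 8)`. -/
def kron2 (a : ℤ) : ℤ := if 2 ∣ a then 0 else if a % 8 = 1 ∨ a % 8 = 7 then 1 else -1

/-- The Kronecker symbol `(a/n)`: completely multiplicative in `n`, equal to the Legendre
symbol at odd primes and to `kron2` at `2`, with `(a/1) = 1`. -/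
def kron (a : ℤ) (n : ℕ) : ℤ :=
  (kron2 a) ^ (n.factorization 2) * jacobiSym a (n / 2 ^ (n.factorization 2))

/-- `S^{(2)}(a,n)`: `1` if `n` is odd, `2` if `n` is even and `a ≡ 5 (mod 8)`,
`0` otherwise. -/
def S2fun (a n : ℕ) : ℤ := if ¬ (2 ∣ n) then 1 else if a % 8 = 5 then 2 else 0

/-- The triple `(a,f,n)` at the prime `ℓ`: `(a₁,f₁,n₁)` if `ν_ℓ(4n₁f₁²) ≥ ν_ℓ(4n₂f₂²)`
and `(a₂,f₂,n₂)` otherwise. -/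
def sel (f₁ f₂ n₁ n₂ a₁ a₂ ℓ : ℕ) : ℕ × ℕ × ℕ :=
  if (4 * n₂ * f₂ ^ 2).factorization ℓ ≤ (4 * n₁ * f₁ ^ 2).factorization ℓ then (a₁, f₁, n₁)
  else (a₂, f₂, n₂)

/-- `C_{p,f}(n₁,n₂)`: the sum over `a₁ ∈ (ℤ/4n₁ℤ)ˣ`, `a₂ ∈ (ℤ/4n₂ℤ)ˣ` with
`a₁ ≡ a₂ ≡ 1 (mod 4)` and `a₁f₁² ≡ a₂f₂² (mod gcd(4n₁f₁²,4n₂f₂²))` of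
`(a₁/n₁)(a₂/n₂) S^{(2)}(a,n) ∏_{ℓ ∣ n₁n₂ odd} C_p^{(ℓ)}(a,f,n)`. -/
def Cpf (p f₁ f₂ n₁ n₂ : ℕ) : ℤ :=
  ∑ a₁ ∈ Finset.range (4 * n₁), ∑ a₂ ∈ Finset.range (4 * n₂),
    if Nat.Coprime a₁ (4 * n₁) ∧ Nat.Coprime a₂ (4 * n₂) ∧ a₁ % 4 = 1 ∧ a₂ % 4 = 1 ∧
        (a₁ * f₁ ^ 2) % (Nat.gcd (4 * n₁ * f₁ ^ 2) (4 * n₂ * f₂ ^ 2)) =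
          (a₂ * f₂ ^ 2) % (Nat.gcd (4 * n₁ * f₁ ^ 2) (4 * n₂ * f₂ ^ 2)) then
      kron (a₁ : ℤ) n₁ * kron (a₂ : ℤ) n₂ *
      S2fun (sel f₁ f₂ n₁ n₂ a₁ a₂ 2).1 (sel f₁ f₂ n₁ n₂ a₁ a₂ 2).2.2 *
      ∏ ℓ ∈ ((n₁ * n₂).primeFactors.erase 2),
        ((Cpl p ((sel f₁ f₂ n₁ n₂ a₁ a₂ ℓ).1 : ℤ) (sel f₁ f₂ n₁ n₂ a₁ a₂ ℓ).2.1
            (sel f₁ f₂ n₁ n₂ a₁ a₂ ℓ).2.2 ℓ : ℤ))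
    else 0


lemma sum_mod_prod {M N : ℕ} (hM : 0 < M) (hN : 0 < N) (h : Nat.Coprime M N) (F : ℕ → ℕ → ℤ) :
    ∑ a ∈ Finset.range (M * N), F (a % M) (a % N)
      = ∑ x ∈ Finset.range M, ∑ y ∈ Finset.range N, F x y := by
  rw [← Finset.sum_product']
  refine Finset.sum_nbij' (fun a => (a % M, a % N))
      (fun q => (Nat.chineseRemainder h q.1 q.2 : ℕ)) ?_ ?_ ?_ ?_ ?_
  · intro a _
    exact Finset.mem_product.mpr ⟨Finset.mem_range.mpr (Nat.mod_lt _ hM),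
      Finset.mem_range.mpr (Nat.mod_lt _ hN)⟩
  · intro q _
    exact Finset.mem_range.mpr (Nat.chineseRemainder_lt_mul h q.1 q.2 hM.ne' hN.ne')
  · intro a ha
    have hc := (Nat.chineseRemainder h (a % M) (a % N)).2
    have h1 : (Nat.chineseRemainder h (a % M) (a % N) : ℕ) ≡ a [MOD M] :=
      hc.1.trans (Nat.mod_modEq a M)
    have h2 : (Nat.chineseRemainder h (a % M) (a % N) : ℕ) ≡ a [MOD N] :=
      hc.2.trans (Nat.mod_modEq a N)
    exact Nat.ModEq.eq_of_lt_of_lt ((Nat.modEq_and_modEq_iff_modEq_mul h).mp ⟨h1, h2⟩)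
      (Nat.chineseRemainder_lt_mul h _ _ hM.ne' hN.ne') (Finset.mem_range.mp ha)
  · intro q hq
    have hc := (Nat.chineseRemainder h q.1 q.2).2
    have hq1 := Finset.mem_range.mp (Finset.mem_product.mp hq).1
    have hq2 := Finset.mem_range.mp (Finset.mem_product.mp hq).2
    have e1 : (Nat.chineseRemainder h q.1 q.2 : ℕ) % M = q.1 := by
      have h1 : (Nat.chineseRemainder h q.1 q.2 : ℕ) % M = q.1 % M := hc.1
      exact h1.trans (Nat.mod_eq_of_lt hq1)
    have e2 : (Nat.chineseRemainder h q.1 q.2 : ℕ) % N = q.2 := by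
      have h2 : (Nat.chineseRemainder h q.1 q.2 : ℕ) % N = q.2 % N := hc.2
      exact h2.trans (Nat.mod_eq_of_lt hq2)
    exact Prod.ext e1 e2
  · intro a _; rfl

lemma sum_mod_collapse (M K : ℕ) (F : ℕ → ℤ) :
    ∑ a ∈ Finset.range (K * M), F (a % M) = K * ∑ x ∈ Finset.range M, F x := by
  induction K with
  | zero => simp
  | succ K ih =>
    rw [Nat.succ_mul, Finset.sum_range_add, ih]
    have : ∀ x ∈ Finset.range M, F ((K * M + x) % M) = F x := by
      intro x hx
      rw [add_comm, Nat.add_mul_mod_self_right, Nat.mod_eq_of_lt (Finset.mem_range.mp hx)]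
    rw [Finset.sum_congr rfl this]
    push_cast
    ring

lemma exists_unique_dvd_sub (N c : ℕ) (hN : 0 < N) (hc : Nat.Coprime c N) (d : ℤ) :
    ∃! y : ℕ, y < N ∧ (N : ℤ) ∣ (d - y * c) := by
  haveI : NeZero N := ⟨hN.ne'⟩
  have hcu : ((c : ZMod N)) * (c : ZMod N)⁻¹ = 1 := ZMod.coe_mul_inv_eq_one c hc
  have key : ∀ y : ℕ, ((N:ℤ) ∣ (d - y * c)) ↔ ((y : ZMod N) = (d : ZMod N) * (c : ZMod N)⁻¹) := by
    intro y
    rw [← ZMod.intCast_zmod_eq_zero_iff_dvd]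
    push_cast
    constructor
    · intro h
      have h' : ((y : ZMod N)) * c = (d : ZMod N) := by
        have := sub_eq_zero.mp h; rw [← this]
      calc (y : ZMod N) = (y : ZMod N) * ((c : ZMod N) * (c : ZMod N)⁻¹) := by rw [hcu, mul_one]
        _ = ((y : ZMod N) * c) * (c : ZMod N)⁻¹ := by ring
        _ = (d : ZMod N) * (c : ZMod N)⁻¹ := by rw [h']
    · intro h
      rw [h]
      have : (d : ZMod N) * (c : ZMod N)⁻¹ * c = d := by
        calc (d : ZMod N) * (c : ZMod N)⁻¹ * c = (d : ZMod N) * ((c:ZMod N) * (c:ZMod N)⁻¹) := by ring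
          _ = d := by rw [hcu, mul_one]
      rw [this, sub_self]
  refine ⟨((d : ZMod N) * (c : ZMod N)⁻¹).val, ⟨ZMod.val_lt _, ?_⟩, ?_⟩
  · rw [key]
    rw [ZMod.natCast_val, ZMod.cast_id]
  · rintro y ⟨hlt, hdvd⟩
    have h := (key y).mp hdvd
    rw [← h, ZMod.val_cast_of_lt hlt]

lemma exists_unique_mulmod (N c d : ℕ) (hN : 0 < N) (hc : Nat.Coprime c N) :
    ∃! y : ℕ, y < N ∧ y * c ≡ d [MOD N] := by
  have h := exists_unique_dvd_sub N c hN hc (d : ℤ)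
  have heq : ∀ y : ℕ, (y * c ≡ d [MOD N]) ↔ ((N:ℤ) ∣ ((d:ℤ) - y * c)) := by
    intro y
    rw [Nat.modEq_iff_dvd]
    push_cast
    rfl
  obtain ⟨y₀, ⟨h1, h2⟩, h3⟩ := h
  exact ⟨y₀, ⟨h1, (heq y₀).mpr h2⟩, fun y ⟨a, b⟩ => h3 y ⟨a, (heq y).mp b⟩⟩

lemma exists_unique_crt (M N u c d : ℕ) (hM : 0 < M) (hN : 0 < N) (hMN : Nat.Coprime M N)
    (hc : Nat.Coprime c N) :
    ∃! b : ℕ, b < M * N ∧ b ≡ u [MOD M] ∧ b * c ≡ d [MOD N] := by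
  obtain ⟨y₀, ⟨hy₀lt, hy₀⟩, hy₀u⟩ := exists_unique_mulmod N c d hN hc
  have hb₀ := (Nat.chineseRemainder hMN u y₀).2
  refine ⟨(Nat.chineseRemainder hMN u y₀ : ℕ),
    ⟨Nat.chineseRemainder_lt_mul hMN u y₀ hM.ne' hN.ne', hb₀.1, (hb₀.2.mul_right c).trans hy₀⟩, ?_⟩
  rintro b ⟨hblt, hbu, hbc⟩
  have h1 : b ≡ (Nat.chineseRemainder hMN u y₀ : ℕ) [MOD M] := hbu.trans hb₀.1.symm
  have h2 : b ≡ (Nat.chineseRemainder hMN u y₀ : ℕ) [MOD N] := by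
    have hbN : b % N = y₀ := by
      refine hy₀u (b % N) ⟨Nat.mod_lt _ hN, ?_⟩
      exact ((Nat.mod_modEq b N).mul_right c).trans hbc
    calc b ≡ b % N [MOD N] := (Nat.mod_modEq b N).symm
      _ = y₀ := hbN
      _ ≡ (Nat.chineseRemainder hMN u y₀ : ℕ) [MOD N] := hb₀.2.symm
  exact Nat.ModEq.eq_of_lt_of_lt ((Nat.modEq_and_modEq_iff_modEq_mul hMN).mp ⟨h1, h2⟩)
    hblt (Nat.chineseRemainder_lt_mul hMN u y₀ hM.ne' hN.ne')

lemma sum_if_unique {s : Finset ℕ} {P : ℕ → Prop} [DecidablePred P] {f : ℕ → ℤ} {b₀ : ℕ}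
    (hmem : b₀ ∈ s) (hP : P b₀) (huniq : ∀ b ∈ s, P b → b = b₀) :
    ∑ b ∈ s, (if P b then f b else 0) = f b₀ := by
  rw [Finset.sum_eq_single_of_mem b₀ hmem ?_, if_pos hP]
  intro b hb hne
  rw [if_neg]
  intro hPb
  exact hne (huniq b hb hPb)

lemma sum_range_zmod (N : ℕ) [NeZero N] (f : ZMod N → ℤ) :
    ∑ r ∈ Finset.range N, f (r : ZMod N) = ∑ t : ZMod N, f t := by
  refine Finset.sum_nbij' (fun r => (r : ZMod N)) (fun t => t.val)
    (fun a _ => Finset.mem_univ _) (fun t _ => Finset.mem_range.mpr (ZMod.val_lt t)) ?_ ?_ ?_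
  · intro a ha; exact ZMod.val_cast_of_lt (Finset.mem_range.mp ha)
  · intro t _; show ((t.val : ℕ) : ZMod N) = t; rw [ZMod.natCast_val, ZMod.cast_id]
  · intro a _; rfl

lemma coprime_mod_iff {a n : ℕ} : Nat.Coprime (a % n) n ↔ Nat.Coprime a n := by
  have h : Nat.gcd a n = Nat.gcd (a % n) n := by
    conv_lhs => rw [Nat.gcd_comm, Nat.gcd_rec]
  unfold Nat.Coprime
  rw [h]

variable {ℓ : ℕ} [Fact ℓ.Prime]

lemma ringChar_ne_two (hℓ2 : ℓ ≠ 2) : ringChar (ZMod ℓ) ≠ 2 := by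
  rw [ZMod.ringChar_zmod_n]
  exact hℓ2

lemma card_sq_eq (hℓ2 : ℓ ≠ 2) (a : ZMod ℓ) :
    ((Finset.univ.filter (fun x : ZMod ℓ => x ^ 2 = a)).card : ℤ)
      = quadraticChar (ZMod ℓ) a + 1 := by
  have h := quadraticChar_card_sqrts (ringChar_ne_two hℓ2) a
  rw [← h]
  congr 1
  rw [Set.toFinset_setOf]

lemma quadChar_sum_mul (hℓ2 : ℓ ≠ 2) (c : ZMod ℓ) (hc : c ≠ 0) :
    ∑ y : ZMod ℓ, quadraticChar (ZMod ℓ) y * quadraticChar (ZMod ℓ) (y + c) = -1 := by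
  set χ := quadraticChar (ZMod ℓ) with hχ
  have step1 : ∀ y : ZMod ℓ, y ≠ 0 → χ y * χ (y + c) = χ (1 + c * y⁻¹) := by
    intro y hy
    have h1 : y + c = y * (1 + c * y⁻¹) := by
      field_simp
    rw [h1, map_mul, ← mul_assoc, ← pow_two, quadraticChar_sq_one hy, one_mul]
  have h0 : ∑ y : ZMod ℓ, χ y * χ (y + c)
      = ∑ y ∈ Finset.univ.erase (0 : ZMod ℓ), χ (1 + c * y⁻¹) := by
    rw [← Finset.sum_erase_add _ _ (Finset.mem_univ (0 : ZMod ℓ))]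
    have hz : χ 0 * χ (0 + c) = 0 := by
      rw [hχ, quadraticChar_zero, zero_mul]
    rw [hz, add_zero]
    refine Finset.sum_congr rfl ?_
    intro y hy
    exact step1 y (Finset.ne_of_mem_erase hy)
  rw [h0]
  have h1 : ∑ y ∈ Finset.univ.erase (0 : ZMod ℓ), χ (1 + c * y⁻¹)
      = ∑ z ∈ Finset.univ.erase (1 : ZMod ℓ), χ z := by
    refine Finset.sum_nbij' (fun y => 1 + c * y⁻¹) (fun z => c * (z - 1)⁻¹) ?_ ?_ ?_ ?_ ?_
    · intro y hy
      have hy0 : y ≠ 0 := Finset.ne_of_mem_erase hy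
      refine Finset.mem_erase.mpr ⟨?_, Finset.mem_univ _⟩
      intro hcon
      have h' : (1 : ZMod ℓ) + c * y⁻¹ = 1 + 0 := by simpa using hcon
      have : c * y⁻¹ = 0 := add_left_cancel h'
      rcases mul_eq_zero.mp this with h | h
      · exact hc h
      · exact hy0 (inv_eq_zero.mp h)
    · intro z hz
      have hz1 : z ≠ 1 := Finset.ne_of_mem_erase hz
      refine Finset.mem_erase.mpr ⟨?_, Finset.mem_univ _⟩
      intro hcon
      rcases mul_eq_zero.mp hcon with h | h
      · exact hc h
      · exact sub_ne_zero.mpr hz1 (inv_eq_zero.mp h)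
    · intro y hy
      have hy0 : y ≠ 0 := Finset.ne_of_mem_erase hy
      field_simp
      simp [hc]
    · intro z hz
      have hz1 : z ≠ 1 := Finset.ne_of_mem_erase hz
      have h2 : z - 1 ≠ 0 := sub_ne_zero.mpr hz1
      field_simp
      ring
    · intro y _; rfl
  rw [h1]
  have h2 : ∑ z ∈ Finset.univ.erase (1 : ZMod ℓ), χ z + χ 1 = 0 := by
    rw [Finset.sum_erase_add _ _ (Finset.mem_univ (1 : ZMod ℓ))]
    exact quadraticChar_sum_zero (ringChar_ne_two hℓ2)
  have h3 : χ 1 = 1 := map_one χ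
  linarith [h2]

lemma quadChar_sum_sq_add (hℓ2 : ℓ ≠ 2) (c : ZMod ℓ) (hc : c ≠ 0) :
    ∑ x : ZMod ℓ, quadraticChar (ZMod ℓ) (x ^ 2 + c) = -1 := by
  set χ := quadraticChar (ZMod ℓ) with hχ
  have fib : ∑ x : ZMod ℓ, χ (x ^ 2 + c)
      = ∑ y : ZMod ℓ, ∑ x ∈ Finset.univ.filter (fun x : ZMod ℓ => x ^ 2 = y), χ (x ^ 2 + c) := by
    rw [Finset.sum_fiberwise]
  rw [fib]
  have inner : ∀ y : ZMod ℓ, ∑ x ∈ Finset.univ.filter (fun x : ZMod ℓ => x ^ 2 = y), χ (x ^ 2 + c)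
      = (χ y + 1) * χ (y + c) := by
    intro y
    have : ∀ x ∈ Finset.univ.filter (fun x : ZMod ℓ => x ^ 2 = y), χ (x ^ 2 + c) = χ (y + c) := by
      intro x hx
      rw [(Finset.mem_filter.mp hx).2]
    rw [Finset.sum_congr rfl this, Finset.sum_const, nsmul_eq_mul, ← card_sq_eq hℓ2]
  rw [Finset.sum_congr rfl (fun y _ => inner y)]
  have expand : ∑ y : ZMod ℓ, (χ y + 1) * χ (y + c)
      = ∑ y : ZMod ℓ, χ y * χ (y + c) + ∑ y : ZMod ℓ, χ (y + c) := by
    rw [← Finset.sum_add_distrib]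
    refine Finset.sum_congr rfl ?_
    intro y _
    ring
  rw [expand, quadChar_sum_mul hℓ2 c hc]
  have shift : ∑ y : ZMod ℓ, χ (y + c) = ∑ y : ZMod ℓ, χ y :=
    Fintype.sum_equiv (Equiv.addRight c) _ _ (fun y => rfl)
  rw [shift, quadraticChar_sum_zero (ringChar_ne_two hℓ2)]
  ring



variable {ℓ : ℕ} [Fact ℓ.Prime]





lemma jacobi_eq_char (a : ℤ) : jacobiSym a ℓ = quadraticChar (ZMod ℓ) (a : ZMod ℓ) :=
  (jacobiSym.legendreSym.to_jacobiSym ℓ a).symm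

lemma S_val (p : ℕ) (hℓ2 : ℓ ≠ 2) (hℓp : ¬ ℓ ∣ p) (n : ℕ) (hn : n ≠ 0) :
    ∑ r ∈ Finset.range ℓ, (if Nat.Coprime r ℓ then (jacobiSym (Dfun (p:ℤ) (r:ℤ)) ℓ) ^ n else 0)
      = if Even n then ((ℓ:ℤ) - 1 - jacobiSym (p:ℤ) ℓ - (jacobiSym ((p:ℤ)-1) ℓ) ^ 2)
        else (-1 - (jacobiSym ((p:ℤ)-1) ℓ) ^ 2) := by
  have hℓ : ℓ.Prime := Fact.out
  haveI : NeZero ℓ := ⟨hℓ.ne_zero⟩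
  set χ := quadraticChar (ZMod ℓ) with hχdef
  set pz : ZMod ℓ := (p : ZMod ℓ) with hpz
  have hpz0 : pz ≠ 0 := by
    rw [hpz, Ne, ZMod.natCast_eq_zero_iff]
    exact hℓp
  have h4 : (4 : ZMod ℓ) ≠ 0 := by
    have : ((4 : ℕ) : ZMod ℓ) ≠ 0 := by
      rw [Ne, ZMod.natCast_eq_zero_iff]
      intro h
      have h4' : ℓ ∣ 2 ^ 2 := by norm_num; exact h
      have h2 : ℓ ∣ 2 := hℓ.dvd_of_dvd_pow h4'
      exact hℓ2 ((Nat.prime_dvd_prime_iff_eq hℓ Nat.prime_two).mp h2)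
    simpa using this
  -- step 1 : rewrite as a sum over `ZMod ℓ`
  have step1 : ∑ r ∈ Finset.range ℓ,
        (if Nat.Coprime r ℓ then (jacobiSym (Dfun (p:ℤ) (r:ℤ)) ℓ) ^ n else 0)
      = ∑ t : ZMod ℓ, (if t ≠ 0 then (χ ((pz + 1 - t) ^ 2 - 4 * pz)) ^ n else 0) := by
    rw [← sum_range_zmod ℓ (fun t => if t ≠ 0 then (χ ((pz + 1 - t) ^ 2 - 4 * pz)) ^ n else 0)]
    refine Finset.sum_congr rfl ?_
    intro r _
    have hcop : Nat.Coprime r ℓ ↔ ((r : ZMod ℓ) ≠ 0) := by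
      rw [Ne, ZMod.natCast_eq_zero_iff, Nat.coprime_comm, hℓ.coprime_iff_not_dvd]
    have hval : jacobiSym (Dfun (p:ℤ) (r:ℤ)) ℓ = χ ((pz + 1 - (r : ZMod ℓ)) ^ 2 - 4 * pz) := by
      rw [jacobi_eq_char]
      congr 1
      rw [Dfun]
      push_cast
      ring
    by_cases h : Nat.Coprime r ℓ
    · rw [if_pos h, if_pos (hcop.mp h), hval]
    · rw [if_neg h, if_neg (fun hc => h (hcop.mpr hc))]
  rw [step1]
  -- step 2 : substitute x = pz + 1 - t
  have step2 : ∑ t : ZMod ℓ, (if t ≠ 0 then (χ ((pz + 1 - t) ^ 2 - 4 * pz)) ^ n else 0)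
      = ∑ x : ZMod ℓ, (if x ≠ pz + 1 then (χ (x ^ 2 - 4 * pz)) ^ n else 0) := by
    refine (Fintype.sum_equiv (Equiv.subLeft (pz + 1))
      (fun x => if x ≠ pz + 1 then (χ (x ^ 2 - 4 * pz)) ^ n else 0)
      (fun t => if t ≠ 0 then (χ ((pz + 1 - t) ^ 2 - 4 * pz)) ^ n else 0) ?_).symm
    intro x
    have e1 : Equiv.subLeft (pz + 1) x = pz + 1 - x := rfl
    rw [e1]
    have hcond : (pz + 1 - x ≠ 0) ↔ (x ≠ pz + 1) := by
      rw [sub_ne_zero]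
      exact ne_comm
    have hval : (χ ((pz + 1 - (pz + 1 - x)) ^ 2 - 4 * pz)) ^ n = (χ (x ^ 2 - 4 * pz)) ^ n := by
      rw [sub_sub_cancel]
    by_cases h : x = pz + 1
    · rw [if_neg (fun hc => hc h), if_neg (fun hc : pz + 1 - x ≠ 0 => (hcond.mp hc) h)]
    · rw [if_pos h, if_pos (hcond.mpr h), hval]
  rw [step2]
  -- notation
  set c : ZMod ℓ := pz + 1 with hc
  have hkey : ∀ w : ZMod ℓ, (χ (w ^ 2)) = (χ w) ^ 2 := fun w => map_pow χ w 2
  have hc2 : c ^ 2 - 4 * pz = (pz - 1) ^ 2 := by rw [hc]; ring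
  have hjp : jacobiSym (p:ℤ) ℓ = χ pz := by
    rw [jacobi_eq_char]; congr 1; push_cast; rfl
  have hjp1 : jacobiSym ((p:ℤ) - 1) ℓ = χ (pz - 1) := by
    rw [jacobi_eq_char]; congr 1; push_cast; rfl
  by_cases hpar : Even n
  · -- even case
    rw [if_pos hpar]
    have hpow : ∀ z : ZMod ℓ, (χ z) ^ n = (χ z) ^ 2 := by
      intro z
      by_cases hz : z = 0
      · rw [hz, quadraticChar_zero, zero_pow hn, zero_pow (by norm_num)]
      · rcases quadraticChar_dichotomy hz with h | h
        · rw [h, one_pow, one_pow]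
        · rw [h, hpar.neg_one_pow, Even.neg_one_pow (by norm_num)]
    have hsq2 : ∀ w : ZMod ℓ, (χ w) ^ 2 = if w = 0 then 0 else 1 := by
      intro w
      by_cases hw : w = 0
      · rw [if_pos hw, hw, quadraticChar_zero, zero_pow (by norm_num : (2:ℕ) ≠ 0)]
      · rw [if_neg hw, quadraticChar_sq_one hw]
    have h1 : ∑ x : ZMod ℓ, (if x ≠ c then (χ (x ^ 2 - 4 * pz)) ^ n else 0)
        = (∑ x : ZMod ℓ, (χ (x ^ 2 - 4 * pz)) ^ 2) - (χ (c ^ 2 - 4 * pz)) ^ 2 := by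
      rw [← Finset.sum_erase_add _ (fun x : ZMod ℓ => (χ (x ^ 2 - 4 * pz)) ^ 2)
        (Finset.mem_univ c)]
      rw [← Finset.sum_erase_add _ _ (Finset.mem_univ c), if_neg (by simp)]
      rw [add_zero, add_sub_cancel_right]
      refine Finset.sum_congr rfl ?_
      intro x hx
      rw [if_pos (Finset.ne_of_mem_erase hx), hpow]
    rw [h1]
    have h2z : (2 : ZMod ℓ) ≠ 0 := by
      intro h
      apply h4
      have : (4 : ZMod ℓ) = 2 * 2 := by norm_num
      rw [this, h, mul_zero]
    have hchi4 : χ (4 * pz) = χ pz := by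
      have e4 : (4 : ZMod ℓ) = 2 ^ 2 := by norm_num
      rw [e4, map_mul, quadraticChar_sq_one' h2z, one_mul]
    have h2 : ∑ x : ZMod ℓ, (χ (x ^ 2 - 4 * pz)) ^ 2 = (ℓ : ℤ) - 1 - χ pz := by
      rw [Finset.sum_congr rfl (fun x _ => hsq2 (x ^ 2 - 4 * pz))]
      rw [Finset.sum_ite, Finset.sum_const, Finset.sum_const, smul_zero, zero_add,
        nsmul_eq_mul, mul_one]
      have hroot : (Finset.univ.filter (fun x : ZMod ℓ => ¬ (x ^ 2 - 4 * pz = 0)))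
          = Finset.univ.filter (fun x : ZMod ℓ => ¬ (x ^ 2 = 4 * pz)) := by
        apply Finset.filter_congr
        intro x _
        rw [sub_eq_zero]
      rw [hroot]
      have hcards := Finset.card_filter_add_card_filter_not
        (s := (Finset.univ : Finset (ZMod ℓ))) (p := fun x : ZMod ℓ => x ^ 2 = 4 * pz)
      have hcount : ((Finset.univ.filter (fun x : ZMod ℓ => x ^ 2 = 4 * pz)).card : ℤ)
          = χ (4 * pz) + 1 := card_sq_eq hℓ2 _
      have hcard : (Finset.univ : Finset (ZMod ℓ)).card = ℓ := by
        rw [Finset.card_univ, ZMod.card]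
      rw [hcard] at hcards
      have : ((Finset.univ.filter (fun x : ZMod ℓ => ¬ (x ^ 2 = 4 * pz))).card : ℤ)
          = (ℓ : ℤ) - (χ (4 * pz) + 1) := by
        rw [← hcount]
        push_cast
        omega
      rw [this, hchi4]
      ring
    rw [h2]
    have h3 : (χ (c ^ 2 - 4 * pz)) ^ 2 = (χ (pz - 1)) ^ 2 := by
      by_cases hw : pz - 1 = 0
      · rw [hc2, hw, show ((0 : ZMod ℓ)) ^ 2 = 0 from by norm_num, quadraticChar_zero]
      · rw [hc2, quadraticChar_sq_one' hw, one_pow, quadraticChar_sq_one hw]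
    rw [h3, hjp, hjp1]
  · -- odd case
    rw [if_neg hpar]
    have hodd : Odd n := Nat.odd_iff.mpr (Nat.not_even_iff.mp hpar)
    have hpow : ∀ z : ZMod ℓ, (χ z) ^ n = χ z := by
      intro z
      by_cases hz : z = 0
      · rw [hz, quadraticChar_zero, zero_pow hn]
      · rcases quadraticChar_dichotomy hz with h | h
        · rw [h, one_pow]
        · rw [h, hodd.neg_one_pow]
    have hsplit : ∑ x : ZMod ℓ, (if x ≠ c then (χ (x ^ 2 - 4 * pz)) ^ n else 0)
        = (∑ x : ZMod ℓ, χ (x ^ 2 - 4 * pz)) - χ (c ^ 2 - 4 * pz) := by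
      rw [← Finset.sum_erase_add _ (fun x : ZMod ℓ => χ (x ^ 2 - 4 * pz)) (Finset.mem_univ c)]
      rw [← Finset.sum_erase_add _ _ (Finset.mem_univ c), if_neg (by simp)]
      rw [add_zero, add_sub_cancel_right]
      refine Finset.sum_congr rfl ?_
      intro x hx
      rw [if_pos (Finset.ne_of_mem_erase hx), hpow]
    rw [hsplit]
    have hsum : ∑ x : ZMod ℓ, χ (x ^ 2 - 4 * pz) = -1 := by
      have h4p : -(4 * pz) ≠ 0 := by
        simp only [neg_ne_zero]
        exact mul_ne_zero h4 hpz0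
      have := quadChar_sum_sq_add hℓ2 (-(4 * pz)) h4p
      calc ∑ x : ZMod ℓ, χ (x ^ 2 - 4 * pz) = ∑ x : ZMod ℓ, χ (x ^ 2 + -(4 * pz)) := by
            refine Finset.sum_congr rfl fun x _ => ?_
            rw [sub_eq_add_neg]
        _ = -1 := this
    rw [hsum, hc2, hkey, hjp1]

def NNfun (p ℓ A F a : ℕ) : ℤ :=
  (((Finset.range (ℓ ^ A)).filter (fun m => Nat.Coprime m (ℓ ^ A) ∧
    ((ℓ : ℤ) ^ A) ∣ (Dfun (p : ℤ) (m : ℤ) - (a : ℤ) * (F : ℤ) ^ 2))).card : ℤ)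

lemma coprime_four {b : ℕ} (h : b % 4 = 1) : Nat.Coprime b 4 := by
  have h2 : Nat.Coprime 2 b := by
    rw [Nat.prime_two.coprime_iff_not_dvd, Nat.dvd_iff_mod_eq_zero]
    omega
  have : Nat.Coprime b (2 ^ 2) := (Nat.Coprime.pow_right 2 h2.symm)
  simpa using this

lemma odd_sq_mod_four {F : ℕ} (hF : Odd F) : F ^ 2 % 4 = 1 := by
  obtain ⟨k, hk⟩ := hF
  have : F ^ 2 = 4 * (k * k + k) + 1 := by rw [hk]; ring
  omega

lemma key (p : ℕ) (ℓ : ℕ) (hℓ : ℓ.Prime) (hℓ2 : ℓ ≠ 2) (hℓp : ¬ ℓ ∣ p)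
    (F G : ℕ) (hF : Odd F) (hG : Odd G) (hℓF : ¬ ℓ ∣ F) (hℓG : ¬ ℓ ∣ G)
    (A B : ℕ) (hA : 1 ≤ A) (hBA : B ≤ A) :
    ∑ a ∈ Finset.range (4 * ℓ ^ A), ∑ b ∈ Finset.range (4 * ℓ ^ B),
      (if Nat.Coprime a (4 * ℓ ^ A) ∧ Nat.Coprime b (4 * ℓ ^ B) ∧ a % 4 = 1 ∧ b % 4 = 1 ∧
          (a * F ^ 2) % (Nat.gcd (4 * ℓ ^ A * F ^ 2) (4 * ℓ ^ B * G ^ 2)) =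
            (b * G ^ 2) % (Nat.gcd (4 * ℓ ^ A * F ^ 2) (4 * ℓ ^ B * G ^ 2)) then
        (jacobiSym (a : ℤ) ℓ) ^ A * (jacobiSym (b : ℤ) ℓ) ^ B * NNfun p ℓ A F a
      else 0)
    = (ℓ : ℤ) ^ (A - 1) *
        (if Even (A + B) then ((ℓ:ℤ) - 1 - jacobiSym (p:ℤ) ℓ - (jacobiSym ((p:ℤ)-1) ℓ) ^ 2)
         else (-1 - (jacobiSym ((p:ℤ)-1) ℓ) ^ 2)) := by
  haveI : Fact ℓ.Prime := ⟨hℓ⟩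
  have hℓ0 : 0 < ℓ := hℓ.pos
  have hℓA : 0 < ℓ ^ A := Nat.pow_pos hℓ0
  have hℓB : 0 < ℓ ^ B := Nat.pow_pos hℓ0
  have hAne : A ≠ 0 := by omega
  have hABne : A + B ≠ 0 := by omega
  have hc2ℓ : Nat.Coprime 2 ℓ := (Nat.coprime_primes Nat.prime_two hℓ).mpr (Ne.symm hℓ2)
  have hc4ℓ : Nat.Coprime 4 ℓ := by
    have := Nat.Coprime.pow_left 2 hc2ℓ
    simpa using this
  have hc4ℓA : Nat.Coprime 4 (ℓ ^ A) := Nat.Coprime.pow_right A hc4ℓ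
  have hc4ℓB : Nat.Coprime 4 (ℓ ^ B) := Nat.Coprime.pow_right B hc4ℓ
  have hcFℓ : Nat.Coprime F ℓ := (hℓ.coprime_iff_not_dvd.mpr hℓF).symm
  have hcGℓ : Nat.Coprime G ℓ := (hℓ.coprime_iff_not_dvd.mpr hℓG).symm
  have hcF2ℓB : Nat.Coprime (F ^ 2) (ℓ ^ B) :=
    Nat.Coprime.pow_right B (Nat.Coprime.pow_left 2 hcFℓ)
  have hcF2ℓA : Nat.Coprime (F ^ 2) (ℓ ^ A) :=
    Nat.Coprime.pow_right A (Nat.Coprime.pow_left 2 hcFℓ)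
  have hcG2ℓB : Nat.Coprime (G ^ 2) (ℓ ^ B) :=
    Nat.Coprime.pow_right B (Nat.Coprime.pow_left 2 hcGℓ)
  set g := Nat.gcd (4 * ℓ ^ A * F ^ 2) (4 * ℓ ^ B * G ^ 2) with hgdef
  -- the value of the gcd
  have hg : g = (4 * Nat.gcd (F ^ 2) (G ^ 2)) * ℓ ^ B := by
    have e1 : 4 * ℓ ^ A * F ^ 2 = (4 * ℓ ^ B) * (ℓ ^ (A - B) * F ^ 2) := by
      rw [← pow_mul_pow_sub ℓ hBA]
      ring
    have e2 : 4 * ℓ ^ B * G ^ 2 = (4 * ℓ ^ B) * G ^ 2 := rfl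
    have hcl : Nat.Coprime (ℓ ^ (A - B)) (G ^ 2) :=
      Nat.Coprime.pow_right 2 (Nat.Coprime.pow_left (A - B) hcGℓ.symm)
    rw [hgdef, e1, e2, Nat.gcd_mul_left, Nat.Coprime.gcd_mul_left_cancel (F ^ 2) hcl]
    ring
  -- the congruence condition modulo `g` reduces to one modulo `ℓ ^ B`
  have cond_iff : ∀ a b : ℕ, a % 4 = 1 → b % 4 = 1 →
      ((a * F ^ 2) % g = (b * G ^ 2) % g ↔ a * F ^ 2 ≡ b * G ^ 2 [MOD ℓ ^ B]) := by
    intro a b ha hb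
    have hcgd : Nat.Coprime (Nat.gcd (F ^ 2) (G ^ 2)) (ℓ ^ B) :=
      Nat.Coprime.coprime_dvd_left (Nat.gcd_dvd_left _ _) hcF2ℓB
    have hcgl : Nat.Coprime (4 * Nat.gcd (F ^ 2) (G ^ 2)) (ℓ ^ B) :=
      Nat.Coprime.mul hc4ℓB hcgd
    have hc4g : Nat.Coprime 4 (Nat.gcd (F ^ 2) (G ^ 2)) := by
      have h4F : Nat.Coprime 4 (F ^ 2) := by
        have h2F : Nat.Coprime 2 F := by
          rw [Nat.prime_two.coprime_iff_not_dvd]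
          intro hd
          obtain ⟨k, hk⟩ := hF
          omega
        have := Nat.Coprime.pow (n := 2) (m := 2) h2F
        simpa using this
      exact Nat.Coprime.coprime_dvd_right (Nat.gcd_dvd_left _ _) h4F
    have auto1 : a * F ^ 2 ≡ b * G ^ 2 [MOD 4] := by
      have haa : a ≡ 1 [MOD 4] := by unfold Nat.ModEq; simpa using ha
      have hbb : b ≡ 1 [MOD 4] := by unfold Nat.ModEq; simpa using hb
      have hFF : F ^ 2 ≡ 1 [MOD 4] := by unfold Nat.ModEq; simpa using odd_sq_mod_four hF
      have hGG : G ^ 2 ≡ 1 [MOD 4] := by unfold Nat.ModEq; simpa using odd_sq_mod_four hG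
      calc a * F ^ 2 ≡ 1 * 1 [MOD 4] := Nat.ModEq.mul haa hFF
        _ ≡ b * G ^ 2 [MOD 4] := (Nat.ModEq.mul hbb hGG).symm
    have auto2 : a * F ^ 2 ≡ b * G ^ 2 [MOD Nat.gcd (F ^ 2) (G ^ 2)] := by
      have h1 : a * F ^ 2 ≡ 0 [MOD Nat.gcd (F ^ 2) (G ^ 2)] :=
        (Nat.modEq_zero_iff_dvd).mpr ((Nat.gcd_dvd_left _ _).trans (dvd_mul_left _ _))
      have h2 : b * G ^ 2 ≡ 0 [MOD Nat.gcd (F ^ 2) (G ^ 2)] :=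
        (Nat.modEq_zero_iff_dvd).mpr ((Nat.gcd_dvd_right _ _).trans (dvd_mul_left _ _))
      exact h1.trans h2.symm
    constructor
    · intro h
      have hmod : a * F ^ 2 ≡ b * G ^ 2 [MOD g] := h
      rw [hg] at hmod
      exact ((Nat.modEq_and_modEq_iff_modEq_mul hcgl).mpr hmod).2
    · intro h
      show a * F ^ 2 ≡ b * G ^ 2 [MOD g]
      rw [hg]
      refine (Nat.modEq_and_modEq_iff_modEq_mul hcgl).mp ⟨?_, h⟩
      exact (Nat.modEq_and_modEq_iff_modEq_mul hc4g).mp ⟨auto1, auto2⟩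
  -- evaluation of the inner sum over `b`
  have inner : ∀ a : ℕ, Nat.Coprime a (ℓ ^ A) → a % 4 = 1 →
      ∑ b ∈ Finset.range (4 * ℓ ^ B),
        (if Nat.Coprime b (4 * ℓ ^ B) ∧ b % 4 = 1 ∧ a * F ^ 2 ≡ b * G ^ 2 [MOD ℓ ^ B]
          then (jacobiSym (b : ℤ) ℓ) ^ B else 0)
      = (jacobiSym (a : ℤ) ℓ) ^ B := by
    intro a haℓ ha4
    have haℓ1 : Nat.Coprime a ℓ :=
      Nat.Coprime.coprime_dvd_right (dvd_pow_self ℓ hAne) haℓ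
    obtain ⟨b₀, ⟨hb₀lt, hb₀4, hb₀c⟩, hb₀u⟩ :=
      exists_unique_crt 4 (ℓ ^ B) 1 (G ^ 2) (a * F ^ 2) (by norm_num) hℓB hc4ℓB hcG2ℓB
    have hb₀4' : b₀ % 4 = 1 := by
      have : b₀ % 4 = 1 % 4 := hb₀4
      simpa using this
    have hb₀cop : Nat.Coprime b₀ (4 * ℓ ^ B) := by
      refine Nat.coprime_mul_iff_right.mpr ⟨coprime_four hb₀4', ?_⟩
      rcases Nat.eq_zero_or_pos B with hB0 | hB0
      · rw [hB0, pow_zero]; exact Nat.coprime_one_right _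
      · have hBne : B ≠ 0 := by omega
        have hnd : ¬ ℓ ∣ b₀ := by
          intro hd
          have h1 : b₀ * G ^ 2 ≡ a * F ^ 2 [MOD ℓ] :=
            Nat.ModEq.of_dvd (dvd_pow_self ℓ hBne) hb₀c
          have h2 : ℓ ∣ b₀ * G ^ 2 := hd.mul_right _
          have h3 : ℓ ∣ a * F ^ 2 := by
            have := (Nat.modEq_zero_iff_dvd).mpr h2
            exact (Nat.modEq_zero_iff_dvd).mp (this.symm.trans h1).symm
          rcases (Nat.Prime.dvd_mul hℓ).mp h3 with h | h
          · exact (hℓ.coprime_iff_not_dvd.mp haℓ1.symm) h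
          · exact hℓF (hℓ.dvd_of_dvd_pow h)
        exact Nat.Coprime.pow_right B ((hℓ.coprime_iff_not_dvd.mpr hnd).symm)
    have huniq : ∀ b ∈ Finset.range (4 * ℓ ^ B),
        (Nat.Coprime b (4 * ℓ ^ B) ∧ b % 4 = 1 ∧ a * F ^ 2 ≡ b * G ^ 2 [MOD ℓ ^ B]) → b = b₀ := by
      rintro b hb ⟨hbcop, hb4, hbc⟩
      refine hb₀u b ⟨Finset.mem_range.mp hb, ?_, hbc.symm⟩
      show b % 4 = 1 % 4
      simpa using hb4
    have hsum : (∑ b ∈ Finset.range (4 * ℓ ^ B),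
        (if Nat.Coprime b (4 * ℓ ^ B) ∧ b % 4 = 1 ∧ a * F ^ 2 ≡ b * G ^ 2 [MOD ℓ ^ B]
          then (jacobiSym (b : ℤ) ℓ) ^ B else 0)) = (jacobiSym (b₀ : ℤ) ℓ) ^ B := by
      exact sum_if_unique (Finset.mem_range.mpr hb₀lt) ⟨hb₀cop, hb₀4', hb₀c.symm⟩ huniq
    rw [hsum]
    rcases Nat.eq_zero_or_pos B with hB0 | hB0
    · rw [hB0, pow_zero, pow_zero]
    · have hBne : B ≠ 0 := by omega
      have hmod : b₀ * G ^ 2 ≡ a * F ^ 2 [MOD ℓ] :=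
        Nat.ModEq.of_dvd (dvd_pow_self ℓ hBne) hb₀c
      have hint : ((b₀ : ℤ) * (G : ℤ) ^ 2) % (ℓ : ℤ) = ((a : ℤ) * (F : ℤ) ^ 2) % (ℓ : ℤ) := by
        have h1 : ((b₀ * G ^ 2 : ℕ) : ℤ) % ((ℓ : ℕ) : ℤ) = ((a * F ^ 2 : ℕ) : ℤ) % ((ℓ : ℕ) : ℤ) := by
          rw [← Int.natCast_mod, ← Int.natCast_mod, hmod]
        push_cast at h1
        exact h1
      have e1 : jacobiSym ((b₀ : ℤ) * (G : ℤ) ^ 2) ℓ = jacobiSym ((a : ℤ) * (F : ℤ) ^ 2) ℓ :=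
        jacobiSym.mod_left' hint
      have hgG : Int.gcd (G : ℤ) (ℓ : ℕ) = 1 := by
        rw [Int.gcd_natCast_natCast]; exact hcGℓ
      have hgF : Int.gcd (F : ℤ) (ℓ : ℕ) = 1 := by
        rw [Int.gcd_natCast_natCast]; exact hcFℓ
      rw [jacobiSym.mul_left, jacobiSym.mul_left, jacobiSym.sq_one' hgG,
        jacobiSym.sq_one' hgF, mul_one, mul_one] at e1
      rw [e1]
  -- reduce the double sum to a single sum
  have stepII : (∑ a ∈ Finset.range (4 * ℓ ^ A), ∑ b ∈ Finset.range (4 * ℓ ^ B),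
      (if Nat.Coprime a (4 * ℓ ^ A) ∧ Nat.Coprime b (4 * ℓ ^ B) ∧ a % 4 = 1 ∧ b % 4 = 1 ∧
          (a * F ^ 2) % g = (b * G ^ 2) % g then
        (jacobiSym (a : ℤ) ℓ) ^ A * (jacobiSym (b : ℤ) ℓ) ^ B * NNfun p ℓ A F a
      else 0))
      = ∑ a ∈ Finset.range (4 * ℓ ^ A),
        (if a % 4 = 1 ∧ Nat.Coprime a (ℓ ^ A)
          then (jacobiSym (a : ℤ) ℓ) ^ (A + B) * NNfun p ℓ A F a else 0) := by
    refine Finset.sum_congr rfl ?_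
    intro a _
    by_cases hPa : a % 4 = 1 ∧ Nat.Coprime a (ℓ ^ A)
    · have hacop : Nat.Coprime a (4 * ℓ ^ A) :=
        Nat.coprime_mul_iff_right.mpr ⟨coprime_four hPa.1, hPa.2⟩
      have e : ∀ b ∈ Finset.range (4 * ℓ ^ B),
          (if Nat.Coprime a (4 * ℓ ^ A) ∧ Nat.Coprime b (4 * ℓ ^ B) ∧ a % 4 = 1 ∧ b % 4 = 1 ∧
              (a * F ^ 2) % g = (b * G ^ 2) % g then
            (jacobiSym (a : ℤ) ℓ) ^ A * (jacobiSym (b : ℤ) ℓ) ^ B * NNfun p ℓ A F a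
          else 0)
          = ((jacobiSym (a : ℤ) ℓ) ^ A * NNfun p ℓ A F a) *
            (if Nat.Coprime b (4 * ℓ ^ B) ∧ b % 4 = 1 ∧ a * F ^ 2 ≡ b * G ^ 2 [MOD ℓ ^ B]
              then (jacobiSym (b : ℤ) ℓ) ^ B else 0) := by
        intro b _
        by_cases hQ : Nat.Coprime b (4 * ℓ ^ B) ∧ b % 4 = 1 ∧
            a * F ^ 2 ≡ b * G ^ 2 [MOD ℓ ^ B]
        · rw [if_pos hQ, if_pos ⟨hacop, hQ.1, hPa.1, hQ.2.1,
            (cond_iff a b hPa.1 hQ.2.1).mpr hQ.2.2⟩]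
          ring
        · rw [if_neg ?_, if_neg hQ, mul_zero]
          rintro ⟨h1, h2, h3, h4, h5⟩
          exact hQ ⟨h2, h4, (cond_iff a b h3 h4).mp h5⟩
      rw [Finset.sum_congr rfl e, ← Finset.mul_sum, inner a hPa.2 hPa.1, if_pos hPa,
        pow_add]
      ring
    · rw [if_neg hPa]
      refine Finset.sum_eq_zero ?_
      intro b _
      rw [if_neg]
      rintro ⟨h1, h2, h3, h4, h5⟩
      exact hPa ⟨h3, Nat.Coprime.coprime_dvd_right (dvd_mul_left _ 4) h1⟩
  rw [stepII]
  -- split the sum by CRT mod 4 and mod ℓ^A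
  have hpoint : ∀ a : ℕ,
      (if a % 4 = 1 ∧ Nat.Coprime a (ℓ ^ A)
        then (jacobiSym (a : ℤ) ℓ) ^ (A + B) * NNfun p ℓ A F a else 0)
      = (fun x y => if x = 1 ∧ Nat.Coprime y (ℓ ^ A)
          then (jacobiSym (y : ℤ) ℓ) ^ (A + B) * NNfun p ℓ A F y else 0) (a % 4) (a % ℓ ^ A) := by
    intro a
    have hcopiff : Nat.Coprime a (ℓ ^ A) ↔ Nat.Coprime (a % ℓ ^ A) (ℓ ^ A) := coprime_mod_iff.symm
    have hJ : jacobiSym (a : ℤ) ℓ = jacobiSym ((a % ℓ ^ A : ℕ) : ℤ) ℓ := by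
      refine jacobiSym.mod_left' ?_
      have h1 : a % ℓ = (a % ℓ ^ A) % ℓ := (Nat.mod_mod_of_dvd a (dvd_pow_self ℓ hAne)).symm
      have h2 : ((a % ℓ : ℕ) : ℤ) = (((a % ℓ ^ A) % ℓ : ℕ) : ℤ) := by rw [h1]
      rw [Int.natCast_mod, Int.natCast_mod] at h2
      exact h2
    have hNN : NNfun p ℓ A F a = NNfun p ℓ A F (a % ℓ ^ A) := by
      unfold NNfun
      congr 1
      refine congrArg Finset.card (Finset.filter_congr ?_)
      intro m _
      have hdiff : ((ℓ : ℤ) ^ A) ∣ ((a : ℤ) - ((a % ℓ ^ A : ℕ) : ℤ)) := by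
        have h3 : a = ℓ ^ A * (a / ℓ ^ A) + a % ℓ ^ A := (Nat.div_add_mod a (ℓ ^ A)).symm
        have h4 : (a : ℤ) = (ℓ : ℤ) ^ A * ((a / ℓ ^ A : ℕ) : ℤ) + ((a % ℓ ^ A : ℕ) : ℤ) := by
          exact_mod_cast congrArg (Nat.cast : ℕ → ℤ) h3
        exact ⟨((a / ℓ ^ A : ℕ) : ℤ), by linarith [h4]⟩
      constructor
      · rintro ⟨h1, h2⟩
        refine ⟨h1, ?_⟩
        have : Dfun (p:ℤ) (m:ℤ) - ((a % ℓ ^ A : ℕ) : ℤ) * (F:ℤ) ^ 2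
            = (Dfun (p:ℤ) (m:ℤ) - (a : ℤ) * (F:ℤ) ^ 2) + ((a : ℤ) - ((a % ℓ ^ A : ℕ) : ℤ)) * (F:ℤ) ^ 2 := by
          ring
        rw [this]
        exact dvd_add h2 (hdiff.mul_right _)
      · rintro ⟨h1, h2⟩
        refine ⟨h1, ?_⟩
        have : Dfun (p:ℤ) (m:ℤ) - (a : ℤ) * (F:ℤ) ^ 2
            = (Dfun (p:ℤ) (m:ℤ) - ((a % ℓ ^ A : ℕ) : ℤ) * (F:ℤ) ^ 2)
              - ((a : ℤ) - ((a % ℓ ^ A : ℕ) : ℤ)) * (F:ℤ) ^ 2 := by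
          ring
        rw [this]
        exact dvd_sub h2 (hdiff.mul_right _)
    simp only []
    by_cases hPa : a % 4 = 1 ∧ Nat.Coprime a (ℓ ^ A)
    · rw [if_pos hPa, if_pos ⟨hPa.1, hcopiff.mp hPa.2⟩, hJ, hNN]
    · rw [if_neg hPa, if_neg]
      rintro ⟨h1, h2⟩
      exact hPa ⟨h1, hcopiff.mpr h2⟩
  rw [Finset.sum_congr rfl (fun a _ => hpoint a), sum_mod_prod (by norm_num) hℓA hc4ℓA
    (fun x y => if x = 1 ∧ Nat.Coprime y (ℓ ^ A)
      then (jacobiSym (y : ℤ) ℓ) ^ (A + B) * NNfun p ℓ A F y else 0)]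
  have step4 : ∀ x ∈ Finset.range 4,
      (∑ y ∈ Finset.range (ℓ ^ A),
        (if x = 1 ∧ Nat.Coprime y (ℓ ^ A)
          then (jacobiSym (y : ℤ) ℓ) ^ (A + B) * NNfun p ℓ A F y else 0))
      = (if x = 1 then (∑ y ∈ Finset.range (ℓ ^ A),
          (if Nat.Coprime y (ℓ ^ A)
            then (jacobiSym (y : ℤ) ℓ) ^ (A + B) * NNfun p ℓ A F y else 0)) else 0) := by
    intro x _
    by_cases hx : x = 1
    · rw [if_pos hx]
      refine Finset.sum_congr rfl ?_
      intro y _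
      by_cases hy : Nat.Coprime y (ℓ ^ A)
      · rw [if_pos ⟨hx, hy⟩, if_pos hy]
      · rw [if_neg (fun hc => hy hc.2), if_neg hy]
    · rw [if_neg hx]
      refine Finset.sum_eq_zero ?_
      intro y _
      rw [if_neg (fun hc => hx hc.1)]
  rw [Finset.sum_congr rfl step4, Finset.sum_ite_eq' (Finset.range 4) 1,
    if_pos (by norm_num : (1:ℕ) ∈ Finset.range 4)]
  -- expand the cardinality as a sum and swap
  have hNNexp : ∀ y : ℕ, NNfun p ℓ A F y = ∑ m ∈ Finset.range (ℓ ^ A),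
      (if Nat.Coprime m (ℓ ^ A) ∧ ((ℓ : ℤ) ^ A) ∣ (Dfun (p:ℤ) (m:ℤ) - (y:ℤ) * (F:ℤ) ^ 2)
        then (1:ℤ) else 0) := by
    intro y
    unfold NNfun
    rw [Finset.card_filter]
    push_cast
    rfl
  have step5 : (∑ y ∈ Finset.range (ℓ ^ A),
      (if Nat.Coprime y (ℓ ^ A)
        then (jacobiSym (y : ℤ) ℓ) ^ (A + B) * NNfun p ℓ A F y else 0))
      = ∑ m ∈ Finset.range (ℓ ^ A), ∑ y ∈ Finset.range (ℓ ^ A),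
        (if Nat.Coprime m (ℓ ^ A) ∧ Nat.Coprime y (ℓ ^ A) ∧
            ((ℓ : ℤ) ^ A) ∣ (Dfun (p:ℤ) (m:ℤ) - (y:ℤ) * (F:ℤ) ^ 2)
          then (jacobiSym (y : ℤ) ℓ) ^ (A + B) else 0) := by
    rw [Finset.sum_comm]
    refine Finset.sum_congr rfl ?_
    intro y _
    by_cases hy : Nat.Coprime y (ℓ ^ A)
    · rw [if_pos hy, hNNexp y, Finset.mul_sum]
      refine Finset.sum_congr rfl ?_
      intro m _
      by_cases hm : Nat.Coprime m (ℓ ^ A) ∧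
          ((ℓ : ℤ) ^ A) ∣ (Dfun (p:ℤ) (m:ℤ) - (y:ℤ) * (F:ℤ) ^ 2)
      · rw [if_pos hm, if_pos ⟨hm.1, hy, hm.2⟩, mul_one]
      · rw [if_neg hm, if_neg (fun hc => hm ⟨hc.1, hc.2.2⟩), mul_zero]
    · rw [if_neg hy]
      refine (Finset.sum_eq_zero ?_).symm
      intro m _
      rw [if_neg (fun hc => hy hc.2.1)]
  rw [step5]
  -- evaluate the inner sum over y
  have hpInt : Prime (ℓ : ℤ) := by rw [Int.prime_iff_natAbs_prime]; simpa using hℓ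
  have step6 : ∀ m : ℕ, (∑ y ∈ Finset.range (ℓ ^ A),
      (if Nat.Coprime m (ℓ ^ A) ∧ Nat.Coprime y (ℓ ^ A) ∧
          ((ℓ : ℤ) ^ A) ∣ (Dfun (p:ℤ) (m:ℤ) - (y:ℤ) * (F:ℤ) ^ 2)
        then (jacobiSym (y : ℤ) ℓ) ^ (A + B) else 0))
      = (if Nat.Coprime m (ℓ ^ A)
          then (jacobiSym (Dfun (p:ℤ) (m:ℤ)) ℓ) ^ (A + B) else 0) := by
    intro m
    by_cases hm : Nat.Coprime m (ℓ ^ A)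
    · rw [if_pos hm]
      obtain ⟨y₀, ⟨hy₀lt, hy₀d⟩, hy₀u⟩ :=
        exists_unique_dvd_sub (ℓ ^ A) (F ^ 2) hℓA hcF2ℓA (Dfun (p:ℤ) (m:ℤ))
      have hcast : ((ℓ ^ A : ℕ) : ℤ) = (ℓ : ℤ) ^ A := by push_cast; rfl
      have hy₀d' : ((ℓ : ℤ) ^ A) ∣ (Dfun (p:ℤ) (m:ℤ) - (y₀:ℤ) * (F:ℤ) ^ 2) := by
        rw [← hcast]
        have := hy₀d
        push_cast at this ⊢
        exact this
      have hdl : (ℓ : ℤ) ∣ (ℓ : ℤ) ^ A := dvd_pow_self _ hAne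
      by_cases hD : (ℓ : ℤ) ∣ Dfun (p:ℤ) (m:ℤ)
      · -- everything vanishes
        have hJ0 : jacobiSym (Dfun (p:ℤ) (m:ℤ)) ℓ = 0 := by
          have : Dfun (p:ℤ) (m:ℤ) % (ℓ : ℤ) = 0 % (ℓ : ℤ) := by
            rw [Int.zero_emod]
            exact Int.emod_eq_zero_of_dvd hD
          rw [jacobiSym.mod_left' this, jacobiSym.zero_left hℓ.one_lt]
        rw [hJ0, zero_pow hABne]
        refine Finset.sum_eq_zero ?_
        intro y _
        rw [if_neg]
        rintro ⟨_, hcy, hdvd⟩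
        have h1 : (ℓ : ℤ) ∣ ((y:ℤ) * (F:ℤ) ^ 2) := by
          have h2 : (ℓ : ℤ) ∣ (Dfun (p:ℤ) (m:ℤ) - (y:ℤ) * (F:ℤ) ^ 2) := hdl.trans hdvd
          have h3 : (y:ℤ) * (F:ℤ) ^ 2 = Dfun (p:ℤ) (m:ℤ) - (Dfun (p:ℤ) (m:ℤ) - (y:ℤ) * (F:ℤ) ^ 2) := by ring
          rw [h3]
          exact dvd_sub hD h2
        rcases hpInt.dvd_mul.mp h1 with h | h
        · have : ℓ ∣ y := Int.natCast_dvd_natCast.mp h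
          have hcyl : Nat.Coprime y ℓ :=
            Nat.Coprime.coprime_dvd_right (dvd_pow_self ℓ hAne) hcy
          exact (hℓ.coprime_iff_not_dvd.mp hcyl.symm) this
        · have : (ℓ:ℤ) ∣ (F:ℤ) := hpInt.dvd_of_dvd_pow h
          exact hℓF (Int.natCast_dvd_natCast.mp this)
      · -- unique nonzero contribution
        have hy₀cop : Nat.Coprime y₀ (ℓ ^ A) := by
          have hnd : ¬ ℓ ∣ y₀ := by
            intro hd
            apply hD
            have h2 : (ℓ:ℤ) ∣ (y₀:ℤ) * (F:ℤ) ^ 2 :=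
              (Int.natCast_dvd_natCast.mpr hd).mul_right _
            have h3 : Dfun (p:ℤ) (m:ℤ)
                = (Dfun (p:ℤ) (m:ℤ) - (y₀:ℤ) * (F:ℤ) ^ 2) + (y₀:ℤ) * (F:ℤ) ^ 2 := by ring
            rw [h3]
            exact dvd_add (hdl.trans hy₀d') h2
          exact Nat.Coprime.pow_right A ((hℓ.coprime_iff_not_dvd.mpr hnd).symm)
        have huniq : ∀ y ∈ Finset.range (ℓ ^ A),
            (Nat.Coprime m (ℓ ^ A) ∧ Nat.Coprime y (ℓ ^ A) ∧
              ((ℓ : ℤ) ^ A) ∣ (Dfun (p:ℤ) (m:ℤ) - (y:ℤ) * (F:ℤ) ^ 2)) → y = y₀ := by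
          rintro y hy ⟨_, _, hdvd⟩
          refine hy₀u y ⟨Finset.mem_range.mp hy, ?_⟩
          rw [hcast]
          push_cast
          push_cast at hdvd
          exact hdvd
        have hsum : (∑ y ∈ Finset.range (ℓ ^ A),
            (if Nat.Coprime m (ℓ ^ A) ∧ Nat.Coprime y (ℓ ^ A) ∧
                ((ℓ : ℤ) ^ A) ∣ (Dfun (p:ℤ) (m:ℤ) - (y:ℤ) * (F:ℤ) ^ 2)
              then (jacobiSym (y : ℤ) ℓ) ^ (A + B) else 0))
            = (jacobiSym (y₀ : ℤ) ℓ) ^ (A + B) := by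
          exact sum_if_unique (Finset.mem_range.mpr hy₀lt) ⟨hm, hy₀cop, hy₀d'⟩ huniq
        rw [hsum]
        have hmodeq : ((y₀:ℤ) * (F:ℤ) ^ 2) % (ℓ:ℤ) = Dfun (p:ℤ) (m:ℤ) % (ℓ:ℤ) := by
          have h2 : (ℓ:ℤ) ∣ (Dfun (p:ℤ) (m:ℤ) - (y₀:ℤ) * (F:ℤ) ^ 2) := hdl.trans hy₀d'
          refine Int.ModEq.symm (Int.modEq_iff_dvd.mpr ?_)
          have h3 : (y₀:ℤ) * (F:ℤ) ^ 2 - Dfun (p:ℤ) (m:ℤ)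
              = -(Dfun (p:ℤ) (m:ℤ) - (y₀:ℤ) * (F:ℤ) ^ 2) := by ring
          rw [h3]
          exact dvd_neg.mpr h2
        have e1 : jacobiSym ((y₀ : ℤ) * (F : ℤ) ^ 2) ℓ = jacobiSym (Dfun (p:ℤ) (m:ℤ)) ℓ :=
          jacobiSym.mod_left' hmodeq
        have hgF : Int.gcd (F : ℤ) (ℓ : ℕ) = 1 := by
          rw [Int.gcd_natCast_natCast]; exact hcFℓ
        rw [jacobiSym.mul_left, jacobiSym.sq_one' hgF, mul_one] at e1
        rw [e1]
    · rw [if_neg hm]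
      refine Finset.sum_eq_zero ?_
      intro y _
      rw [if_neg (fun hc => hm hc.1)]
  rw [Finset.sum_congr rfl (fun m _ => step6 m)]
  -- collapse modulo ℓ
  have hpow : ℓ ^ A = ℓ ^ (A - 1) * ℓ := by
    rw [← pow_succ, Nat.sub_add_cancel hA]
  have hptw : ∀ m : ℕ,
      (if Nat.Coprime m (ℓ ^ A) then (jacobiSym (Dfun (p:ℤ) (m:ℤ)) ℓ) ^ (A + B) else 0)
      = (fun r => if Nat.Coprime r ℓ then (jacobiSym (Dfun (p:ℤ) (r:ℤ)) ℓ) ^ (A + B) else 0)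
        (m % ℓ) := by
    intro m
    have hiff : Nat.Coprime m (ℓ ^ A) ↔ Nat.Coprime (m % ℓ) ℓ := by
      rw [Nat.coprime_pow_right_iff (by omega : 0 < A)]
      exact coprime_mod_iff.symm
    have hJ : jacobiSym (Dfun (p:ℤ) (m:ℤ)) ℓ = jacobiSym (Dfun (p:ℤ) ((m % ℓ : ℕ):ℤ)) ℓ := by
      refine jacobiSym.mod_left' ?_
      have h1 : (m:ℤ) % (ℓ:ℤ) = ((m % ℓ : ℕ) : ℤ) % (ℓ:ℤ) := by
        rw [Int.natCast_mod]
        rw [Int.emod_emod_of_dvd _ dvd_rfl]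
      have hm1 : (m:ℤ) ≡ ((m % ℓ : ℕ) : ℤ) [ZMOD (ℓ:ℤ)] := h1
      have : Dfun (p:ℤ) (m:ℤ) ≡ Dfun (p:ℤ) ((m % ℓ : ℕ):ℤ) [ZMOD (ℓ:ℤ)] := by
        unfold Dfun
        exact Int.ModEq.sub (((Int.ModEq.refl ((p:ℤ) + 1)).sub hm1).pow 2) (Int.ModEq.refl _)
      exact this
    simp only []
    by_cases hc : Nat.Coprime m (ℓ ^ A)
    · rw [if_pos hc, if_pos (hiff.mp hc), hJ]
    · rw [if_neg hc, if_neg (fun h => hc (hiff.mpr h))]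
  rw [Finset.sum_congr rfl (fun m _ => hptw m), hpow, sum_mod_collapse ℓ (ℓ ^ (A - 1))
    (fun r => if Nat.Coprime r ℓ then (jacobiSym (Dfun (p:ℤ) (r:ℤ)) ℓ) ^ (A + B) else 0)]
  rw [S_val p hℓ2 hℓp (A + B) hABne]
  push_cast
  ring

section lemmas

variable {ℓ : ℕ}

lemma nd4 (hℓ : ℓ.Prime) (hℓ2 : ℓ ≠ 2) : ¬ ℓ ∣ 4 := by
  intro h
  have h4 : ℓ ∣ 2 ^ 2 := by norm_num; exact h
  have h2 : ℓ ∣ 2 := hℓ.dvd_of_dvd_pow h4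
  exact hℓ2 ((Nat.prime_dvd_prime_iff_eq hℓ Nat.prime_two).mp h2)

lemma fac_ell (hℓ : ℓ.Prime) (hℓ2 : ℓ ≠ 2) (f α : ℕ) (hf0 : 0 < f) (hℓf : ¬ ℓ ∣ f) :
    (4 * ℓ ^ α * f ^ 2).factorization ℓ = α := by
  have hℓ0 : ℓ ≠ 0 := hℓ.ne_zero
  have h4 : (4 : ℕ) * ℓ ^ α ≠ 0 := by positivity
  have hf2 : f ^ 2 ≠ 0 := by positivity
  rw [Nat.factorization_mul h4 hf2, Nat.factorization_mul (by norm_num) (by positivity),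
    Finsupp.add_apply, Finsupp.add_apply]
  have e1 : (Nat.factorization 4) ℓ = 0 :=
    Nat.factorization_eq_zero_of_not_dvd (nd4 hℓ hℓ2)
  have e2 : ((ℓ ^ α).factorization) ℓ = α := by
    rw [hℓ.factorization_pow, Finsupp.single_eq_same]
  have e3 : ((f ^ 2).factorization) ℓ = 0 := by
    refine Nat.factorization_eq_zero_of_not_dvd ?_
    intro h
    exact hℓf (hℓ.dvd_of_dvd_pow h)
  rw [e1, e2, e3]
  omega

lemma fac_two (hℓ : ℓ.Prime) (hℓ2 : ℓ ≠ 2) (f α : ℕ) (hf : Odd f) (hf0 : 0 < f) :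
    (4 * ℓ ^ α * f ^ 2).factorization 2 = 2 := by
  have hℓ0 : ℓ ≠ 0 := hℓ.ne_zero
  have h4 : (4 : ℕ) * ℓ ^ α ≠ 0 := by positivity
  have hf2 : f ^ 2 ≠ 0 := by positivity
  rw [Nat.factorization_mul h4 hf2, Nat.factorization_mul (by norm_num) (by positivity),
    Finsupp.add_apply, Finsupp.add_apply]
  have e1 : (Nat.factorization 4) 2 = 2 := by
    rw [show (4 : ℕ) = 2 ^ 2 from rfl, Nat.Prime.factorization_pow Nat.prime_two,
      Finsupp.single_eq_same]
  have e2 : ((ℓ ^ α).factorization) 2 = 0 := by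
    rw [hℓ.factorization_pow, Finsupp.single_apply, if_neg hℓ2]
  have e3 : ((f ^ 2).factorization) 2 = 0 := by
    refine Nat.factorization_eq_zero_of_not_dvd ?_
    intro h
    have := Nat.prime_two.dvd_of_dvd_pow h
    rw [Nat.odd_iff] at hf
    omega
  rw [e1, e2, e3]

lemma kron_eq (hℓ : ℓ.Prime) (hℓ2 : ℓ ≠ 2) (a : ℤ) (α : ℕ) : kron a (ℓ ^ α) = (jacobiSym a ℓ) ^ α := by
  unfold kron
  have h2 : ((ℓ ^ α).factorization) 2 = 0 := by
    rw [hℓ.factorization_pow, Finsupp.single_apply, if_neg hℓ2]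
  rw [h2, pow_zero, one_mul, pow_zero, Nat.div_one, jacobiSym.pow_right]

lemma S2_eq (hℓ : ℓ.Prime) (hℓ2 : ℓ ≠ 2) (x α : ℕ) : S2fun x (ℓ ^ α) = 1 := by
  unfold S2fun
  rw [if_pos]
  intro h
  have h2 : ℓ ∣ 2 → False := fun hd =>
    hℓ2 (Nat.le_antisymm (Nat.le_of_dvd (by norm_num) hd) hℓ.two_le)
  exact h2 ((Nat.prime_dvd_prime_iff_eq Nat.prime_two hℓ).mp
    (Nat.prime_two.dvd_of_dvd_pow h) ▸ dvd_refl ℓ)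

lemma pf_erase (hℓ : ℓ.Prime) (hℓ2 : ℓ ≠ 2) (α₁ α₂ : ℕ) (hα : α₁ + α₂ ≠ 0) :
    ((ℓ ^ α₁ * ℓ ^ α₂).primeFactors).erase 2 = {ℓ} := by
  rw [← pow_add, Nat.primeFactors_prime_pow hα hℓ]
  refine Finset.erase_eq_of_notMem ?_
  rw [Finset.mem_singleton]
  exact fun h => hℓ2 h.symm

lemma Cpl_eq (hℓ : ℓ.Prime) (hℓ2 : ℓ ≠ 2) (p f α a : ℕ) (hf0 : 0 < f) (hℓf : ¬ ℓ ∣ f) :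
    ((Cpl p (a : ℤ) f (ℓ ^ α) ℓ : ℕ) : ℤ) = NNfun p ℓ α f a := by
  unfold Cpl NNfun
  rw [fac_ell hℓ hℓ2 f α hf0 hℓf]

end lemmas

/-- Lemma 3.4 (iv): for an odd prime `ℓ ∤ p f₁ f₂` and `max(α₁,α₂) ≥ 1`,
`C_{p,f}(ℓ^{α₁},ℓ^{α₂}) = ℓ^{max(α₁,α₂)-1}(ℓ-1-(p/ℓ)-((p-1)/ℓ)²)` if `α₁+α₂` is even and
`ℓ^{max(α₁,α₂)-1}(-1-((p-1)/ℓ)²)` if `α₁+α₂` is odd. -/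
theorem Cpf_at_ell_coprime (p : ℕ) (hp : p.Prime) (hp2 : p ≠ 2)
    (f₁ f₂ : ℕ) (hf₁ : Odd f₁) (hf₂ : Odd f₂) (hf₁0 : 0 < f₁) (hf₂0 : 0 < f₂)
    (ℓ : ℕ) (hℓ : ℓ.Prime) (hℓ2 : ℓ ≠ 2) (hℓnd : ¬ ℓ ∣ p * f₁ * f₂)
    (α₁ α₂ : ℕ) (hα : 1 ≤ max α₁ α₂) :
    (Even (α₁ + α₂) →
      Cpf p f₁ f₂ (ℓ ^ α₁) (ℓ ^ α₂) = (ℓ : ℤ) ^ (max α₁ α₂ - 1) *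
        ((ℓ : ℤ) - 1 - jacobiSym (p : ℤ) ℓ - (jacobiSym ((p : ℤ) - 1) ℓ) ^ 2)) ∧
    (Odd (α₁ + α₂) →
      Cpf p f₁ f₂ (ℓ ^ α₁) (ℓ ^ α₂) = (ℓ : ℤ) ^ (max α₁ α₂ - 1) *
        (-1 - (jacobiSym ((p : ℤ) - 1) ℓ) ^ 2)) := by
  have hndp : ¬ ℓ ∣ p := fun h => hℓnd ((h.mul_right f₁).mul_right f₂)
  have hndf1 : ¬ ℓ ∣ f₁ := fun h => hℓnd (Dvd.dvd.mul_right (h.mul_left p) f₂)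
  have hndf2 : ¬ ℓ ∣ f₂ := fun h => hℓnd (h.mul_left (p * f₁))
  have hsum_ne : α₁ + α₂ ≠ 0 := by
    rcases Nat.max_le.mp (le_refl (max α₁ α₂)) with ⟨h1, h2⟩
    omega
  have hfac2₁ := fac_two hℓ hℓ2 f₁ α₁ hf₁ hf₁0
  have hfac2₂ := fac_two hℓ hℓ2 f₂ α₂ hf₂ hf₂0
  have hfacℓ₁ := fac_ell hℓ hℓ2 f₁ α₁ hf₁0 hndf1
  have hfacℓ₂ := fac_ell hℓ hℓ2 f₂ α₂ hf₂0 hndf2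
  have hsel2 : ∀ a₁ a₂ : ℕ, sel f₁ f₂ (ℓ ^ α₁) (ℓ ^ α₂) a₁ a₂ 2 = (a₁, f₁, ℓ ^ α₁) := by
    intro a₁ a₂
    unfold sel
    rw [hfac2₁, hfac2₂, if_pos (le_refl 2)]
  have master : Cpf p f₁ f₂ (ℓ ^ α₁) (ℓ ^ α₂) = (ℓ : ℤ) ^ (max α₁ α₂ - 1) *
      (if Even (α₁ + α₂) then
        ((ℓ:ℤ) - 1 - jacobiSym (p:ℤ) ℓ - (jacobiSym ((p:ℤ)-1) ℓ) ^ 2)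
       else (-1 - (jacobiSym ((p:ℤ)-1) ℓ) ^ 2)) := by
    by_cases hord : α₂ ≤ α₁
    · have hmax : max α₁ α₂ = α₁ := Nat.max_eq_left hord
      have hA1 : 1 ≤ α₁ := by omega
      have hselℓ : ∀ a₁ a₂ : ℕ, sel f₁ f₂ (ℓ ^ α₁) (ℓ ^ α₂) a₁ a₂ ℓ = (a₁, f₁, ℓ ^ α₁) := by
        intro a₁ a₂
        unfold sel
        rw [hfacℓ₁, hfacℓ₂, if_pos hord]
      have hCpf : Cpf p f₁ f₂ (ℓ ^ α₁) (ℓ ^ α₂)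
          = ∑ a ∈ Finset.range (4 * ℓ ^ α₁), ∑ b ∈ Finset.range (4 * ℓ ^ α₂),
            (if Nat.Coprime a (4 * ℓ ^ α₁) ∧ Nat.Coprime b (4 * ℓ ^ α₂) ∧
                a % 4 = 1 ∧ b % 4 = 1 ∧
                (a * f₁ ^ 2) % (Nat.gcd (4 * ℓ ^ α₁ * f₁ ^ 2) (4 * ℓ ^ α₂ * f₂ ^ 2)) =
                  (b * f₂ ^ 2) % (Nat.gcd (4 * ℓ ^ α₁ * f₁ ^ 2) (4 * ℓ ^ α₂ * f₂ ^ 2)) then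
              (jacobiSym (a : ℤ) ℓ) ^ α₁ * (jacobiSym (b : ℤ) ℓ) ^ α₂ * NNfun p ℓ α₁ f₁ a
            else 0) := by
        unfold Cpf
        refine Finset.sum_congr rfl ?_
        intro a _
        refine Finset.sum_congr rfl ?_
        intro b _
        by_cases hcond : Nat.Coprime a (4 * ℓ ^ α₁) ∧ Nat.Coprime b (4 * ℓ ^ α₂) ∧
            a % 4 = 1 ∧ b % 4 = 1 ∧
            (a * f₁ ^ 2) % (Nat.gcd (4 * ℓ ^ α₁ * f₁ ^ 2) (4 * ℓ ^ α₂ * f₂ ^ 2)) =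
              (b * f₂ ^ 2) % (Nat.gcd (4 * ℓ ^ α₁ * f₁ ^ 2) (4 * ℓ ^ α₂ * f₂ ^ 2))
        · rw [if_pos hcond, if_pos hcond, hsel2 a b, S2_eq hℓ hℓ2,
            pf_erase hℓ hℓ2 α₁ α₂ hsum_ne, Finset.prod_singleton, hselℓ a b,
            kron_eq hℓ hℓ2, kron_eq hℓ hℓ2]
          rw [Cpl_eq hℓ hℓ2 p f₁ α₁ a hf₁0 hndf1]
          ring
        · rw [if_neg hcond, if_neg hcond]
      rw [hmax, hCpf,
        key p ℓ hℓ hℓ2 hndp f₁ f₂ hf₁ hf₂ hndf1 hndf2 α₁ α₂ hA1 hord]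
    · have hord' : α₁ ≤ α₂ := by omega
      have hmax : max α₁ α₂ = α₂ := Nat.max_eq_right hord'
      have hA1 : 1 ≤ α₂ := by omega
      have hselℓ : ∀ a₁ a₂ : ℕ, sel f₁ f₂ (ℓ ^ α₁) (ℓ ^ α₂) a₁ a₂ ℓ = (a₂, f₂, ℓ ^ α₂) := by
        intro a₁ a₂
        unfold sel
        rw [hfacℓ₁, hfacℓ₂, if_neg hord]
      have hCpf : Cpf p f₁ f₂ (ℓ ^ α₁) (ℓ ^ α₂)
          = ∑ a ∈ Finset.range (4 * ℓ ^ α₂), ∑ b ∈ Finset.range (4 * ℓ ^ α₁),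
            (if Nat.Coprime a (4 * ℓ ^ α₂) ∧ Nat.Coprime b (4 * ℓ ^ α₁) ∧
                a % 4 = 1 ∧ b % 4 = 1 ∧
                (a * f₂ ^ 2) % (Nat.gcd (4 * ℓ ^ α₂ * f₂ ^ 2) (4 * ℓ ^ α₁ * f₁ ^ 2)) =
                  (b * f₁ ^ 2) % (Nat.gcd (4 * ℓ ^ α₂ * f₂ ^ 2) (4 * ℓ ^ α₁ * f₁ ^ 2)) then
              (jacobiSym (a : ℤ) ℓ) ^ α₂ * (jacobiSym (b : ℤ) ℓ) ^ α₁ * NNfun p ℓ α₂ f₂ a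
            else 0) := by
        unfold Cpf
        rw [Finset.sum_comm]
        refine Finset.sum_congr rfl ?_
        intro a _
        refine Finset.sum_congr rfl ?_
        intro b _
        have hgcd : Nat.gcd (4 * ℓ ^ α₁ * f₁ ^ 2) (4 * ℓ ^ α₂ * f₂ ^ 2)
            = Nat.gcd (4 * ℓ ^ α₂ * f₂ ^ 2) (4 * ℓ ^ α₁ * f₁ ^ 2) := Nat.gcd_comm _ _
        have hiff : (Nat.Coprime b (4 * ℓ ^ α₁) ∧ Nat.Coprime a (4 * ℓ ^ α₂) ∧
              b % 4 = 1 ∧ a % 4 = 1 ∧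
              (b * f₁ ^ 2) % (Nat.gcd (4 * ℓ ^ α₁ * f₁ ^ 2) (4 * ℓ ^ α₂ * f₂ ^ 2)) =
                (a * f₂ ^ 2) % (Nat.gcd (4 * ℓ ^ α₁ * f₁ ^ 2) (4 * ℓ ^ α₂ * f₂ ^ 2)))
            ↔ (Nat.Coprime a (4 * ℓ ^ α₂) ∧ Nat.Coprime b (4 * ℓ ^ α₁) ∧
              a % 4 = 1 ∧ b % 4 = 1 ∧
              (a * f₂ ^ 2) % (Nat.gcd (4 * ℓ ^ α₂ * f₂ ^ 2) (4 * ℓ ^ α₁ * f₁ ^ 2)) =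
                (b * f₁ ^ 2) % (Nat.gcd (4 * ℓ ^ α₂ * f₂ ^ 2) (4 * ℓ ^ α₁ * f₁ ^ 2))) := by
          rw [← hgcd]
          constructor
          · rintro ⟨h1, h2, h3, h4, h5⟩; exact ⟨h2, h1, h4, h3, h5.symm⟩
          · rintro ⟨h1, h2, h3, h4, h5⟩; exact ⟨h2, h1, h4, h3, h5.symm⟩
        by_cases hcond : Nat.Coprime a (4 * ℓ ^ α₂) ∧ Nat.Coprime b (4 * ℓ ^ α₁) ∧
            a % 4 = 1 ∧ b % 4 = 1 ∧
            (a * f₂ ^ 2) % (Nat.gcd (4 * ℓ ^ α₂ * f₂ ^ 2) (4 * ℓ ^ α₁ * f₁ ^ 2)) =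
              (b * f₁ ^ 2) % (Nat.gcd (4 * ℓ ^ α₂ * f₂ ^ 2) (4 * ℓ ^ α₁ * f₁ ^ 2))
        · rw [if_pos (hiff.mpr hcond), if_pos hcond, hsel2 b a, S2_eq hℓ hℓ2,
            pf_erase hℓ hℓ2 α₁ α₂ hsum_ne, Finset.prod_singleton, hselℓ b a,
            kron_eq hℓ hℓ2, kron_eq hℓ hℓ2]
          rw [Cpl_eq hℓ hℓ2 p f₂ α₂ a hf₂0 hndf2]
          ring
        · rw [if_neg (fun h => hcond (hiff.mp h)), if_neg hcond]
      rw [hmax, hCpf,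
        key p ℓ hℓ hℓ2 hndp f₂ f₁ hf₂ hf₁ hndf2 hndf1 α₂ α₁ hA1 hord']
      rw [Nat.add_comm α₂ α₁]
  constructor
  · intro hpar
    rw [master, if_pos hpar]
  · intro hpar
    rw [master, if_neg (Nat.not_even_iff_odd.mpr hpar)]

end
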